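/- Let ρ = diag(p, 1−p) with 0 ≤ p < 1/2 be a qubit density matrix diagonal in the energy basis, and H = diag(0, ω) with ω > 0. Then for every 2×2 unitary V, with W = H − V†HV and w = Tr[Wρ], the variance satisfies Tr[W²ρ] − w² = ω w/(1−2p) − w². Hence for an incoherent qubit state the variance gain is uniquely determined by the extracted work w. -/

import Mathlib

open Matrix

/-- For an incoherent qubit state `ρ = diag(p, 1-p)` with `0 ≤ p < 1/2` and
`H = diag(0, ω)`, `ω > 0`, every unitary `V` with work operator `W = H - V†HV` and
extracted work `w = Tr[Wρ]` yields variance `Tr[W²ρ] - w² = ω w/(1-2p) - w²`. -/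
theorem stmt_12 (p ω : ℝ) (hp0 : 0 ≤ p) (hp : p < 1 / 2) (hω : 0 < ω)
    (V : Matrix (Fin 2) (Fin 2) ℂ) (hV : V ∈ Matrix.unitaryGroup (Fin 2) ℂ) :
    let ρ : Matrix (Fin 2) (Fin 2) ℂ := !![(p : ℂ), 0; 0, ((1 - p : ℝ) : ℂ)]
    let H : Matrix (Fin 2) (Fin 2) ℂ := !![0, 0; 0, (ω : ℂ)]
    let W : Matrix (Fin 2) (Fin 2) ℂ := H - Vᴴ * H * V
    (W ^ 2 * ρ).trace - (W * ρ).trace ^ 2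
      = (ω : ℂ) * (W * ρ).trace / ((1 : ℂ) - 2 * (p : ℂ)) - (W * ρ).trace ^ 2 := by
  intro ρ H W
  have hVV : V * Vᴴ = 1 := (Matrix.mem_unitaryGroup_iff.mp hV)
  have hab : V 1 0 * star (V 1 0) + V 1 1 * star (V 1 1) = 1 := by
    have := congrFun (congrFun (congrArg (fun M => fun i j => M i j) hVV) 1) 1
    simpa [Matrix.mul_apply, Fin.sum_univ_succ, Matrix.conjTranspose_apply] using this
  have hr : (1 - 2 * p : ℝ) ≠ 0 := by linarith
  have h12 : (1 : ℂ) - 2 * (p : ℂ) ≠ 0 := by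
    have := Complex.ofReal_ne_zero.mpr hr
    push_cast at this
    exact this
  simp only [ρ, H, W, pow_two, Matrix.trace_fin_two, Matrix.mul_apply, Matrix.sub_apply,
    Matrix.conjTranspose_apply, Fin.sum_univ_succ, Fin.sum_univ_zero]
  simp only [Matrix.cons_val_zero, Matrix.cons_val_one, Matrix.head_cons, Matrix.head_fin_const,
    Matrix.of_apply, Fin.succ_zero_eq_one, starRingEnd_apply, Complex.ofReal_sub, Complex.ofReal_one]
  rw [sub_left_inj, eq_div_iff h12]
  simp only [← starRingEnd_apply] at hab ⊢
  linear_combination ((ω:ℂ)^2 * (-(1 - 2*(p:ℂ))^2 * (V 1 0 * (starRingEnd ℂ) (V 1 0))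
    + (1 - 2*(p:ℂ)) * (1 - (p:ℂ)) * (V 1 0 * (starRingEnd ℂ) (V 1 0)
      + V 1 1 * (starRingEnd ℂ) (V 1 1) - 1) + (1 - (p:ℂ)))) * hab
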